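/- Let f = h + conj(g) be harmonic in the unit disk 𝔻 with positive Jacobian J_f = |h'|² − |g'|² > 0 in 𝔻, and suppose Λ_y((h−g)(𝔻)) = Λ_y(f(𝔻)). If f is injective on 𝔻 and f(𝔻) is the union of two non-disjoint domains each convex in the direction of the real axis, then h − g is injective on 𝔻 and (h−g)(𝔻) is the union of two non-disjoint domains each convex in the direction of the real axis. -/

import Mathlib

open Complex Set Metric

/-- Projection of a planar set onto the imaginary axis. -/
def Py (D : Set ℂ) : Set ℝ := {a : ℝ | ∃ z ∈ D, z.im = a}

/-- `Λ_y(D)`: imaginary parts `a` such that the horizontal slice of `D` at height `a`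
is nonempty and connected. -/
def Ly (D : Set ℂ) : Set ℝ := {a : ℝ | IsConnected (D ∩ {z : ℂ | z.im = a})}

/-- Convexity in the direction of the real axis. -/
def CvxRe (D : Set ℂ) : Prop :=
  ∀ z ∈ D, ∀ w ∈ D, z.im = w.im → segment ℝ z w ⊆ D

/-- Local injectivity of `q` on `S`. -/
def LocInjOn (q : ℂ → ℂ) (S : Set ℂ) : Prop :=
  ∀ z ∈ S, ∃ U ∈ nhdsWithin z S, Set.InjOn q U

section ShearHelpers

noncomputable def shearEquiv (a c : ℂ) (hac : ‖c‖ < ‖a‖) : ℂ ≃L[ℝ] ℂ := by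
  have hΔ : (0:ℝ) < Complex.normSq a - Complex.normSq c := by
    rw [← Complex.sq_norm, ← Complex.sq_norm]
    have := pow_lt_pow_left₀ hac (norm_nonneg c) (two_ne_zero)
    linarith
  have hΔ' : ((Complex.normSq a - Complex.normSq c : ℝ) : ℂ) ≠ 0 :=
    Complex.ofReal_ne_zero.2 (ne_of_gt hΔ)
  have hΔeq : ((Complex.normSq a - Complex.normSq c : ℝ) : ℂ)
      = a * (starRingEnd ℂ) a - c * (starRingEnd ℂ) c := by
    rw [Complex.ofReal_sub, Complex.mul_conj, Complex.mul_conj]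
  exact LinearEquiv.toContinuousLinearEquiv
    { toFun := fun w => a * w + c * (starRingEnd ℂ) w
      map_add' := by intro w v; simp only [map_add]; ring
      map_smul' := by
        intro r w
        simp only [Complex.real_smul, RingHom.id_apply, map_mul, Complex.conj_ofReal]
        ring
      invFun := fun u => ((starRingEnd ℂ) a * u - c * (starRingEnd ℂ) u) /
        ((Complex.normSq a - Complex.normSq c : ℝ) : ℂ)
      left_inv := by
        intro w
        rw [div_eq_iff hΔ', hΔeq]
        simp only [map_add, map_mul, Complex.conj_conj]
        ring
      right_inv := by
        intro u
        simp only [map_div₀, map_sub, map_mul, Complex.conj_conj, Complex.conj_ofReal]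
        rw [← mul_div_assoc, ← mul_div_assoc, ← add_div, div_eq_iff hΔ', hΔeq]
        ring }

@[simp] lemma shearEquiv_apply (a c : ℂ) (hac : ‖c‖ < ‖a‖) (w : ℂ) :
    (shearEquiv a c hac : ℂ →L[ℝ] ℂ) w = a * w + c * (starRingEnd ℂ) w := rfl

lemma fderiv_apply_eq_deriv {q : ℂ → ℂ} {z : ℂ} (w : ℂ) :
    fderiv ℂ q z w = deriv q z * w := by
  rw [deriv, mul_comm, ← smul_eq_mul, ← (fderiv ℂ q z).map_smul, smul_eq_mul, mul_one]

lemma shear_hasStrictFDerivAt {h g : ℂ → ℂ} {s : Set ℂ} (hs : IsOpen s)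
    (hh : DifferentiableOn ℂ h s) (hg : DifferentiableOn ℂ g s) {z : ℂ} (hz : z ∈ s)
    (hJ : ‖deriv g z‖ < ‖deriv h z‖) :
    HasStrictFDerivAt (fun w => h w + (starRingEnd ℂ) (g w))
      ((shearEquiv (deriv h z) ((starRingEnd ℂ) (deriv g z))
        (by simpa using hJ) : ℂ ≃L[ℝ] ℂ) : ℂ →L[ℝ] ℂ) z := by
  have Hh : HasStrictFDerivAt h ((fderiv ℂ h z).restrictScalars ℝ) z :=
    ((hh.analyticAt (hs.mem_nhds hz)).hasStrictFDerivAt).restrictScalars ℝ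
  have Hg : HasStrictFDerivAt g ((fderiv ℂ g z).restrictScalars ℝ) z :=
    ((hg.analyticAt (hs.mem_nhds hz)).hasStrictFDerivAt).restrictScalars ℝ
  have Hc : HasStrictFDerivAt (fun w => (starRingEnd ℂ) (g w))
      ((Complex.conjCLE.toContinuousLinearMap).comp ((fderiv ℂ g z).restrictScalars ℝ)) z :=
    (Complex.conjCLE.toContinuousLinearMap.hasStrictFDerivAt).comp z Hg
  have Hsum : HasStrictFDerivAt (fun w => h w + (starRingEnd ℂ) (g w)) _ z := Hh.add Hc
  convert Hsum using 1
  ext w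
  simp [ContinuousLinearMap.add_apply, fderiv_apply_eq_deriv, map_mul]
  ring

lemma isOpen_image_of_strict {q : ℂ → ℂ} {U : Set ℂ}
    (hq : ∀ z ∈ U, ∃ e : ℂ ≃L[ℝ] ℂ, HasStrictFDerivAt q (e : ℂ →L[ℝ] ℂ) z)
    (hU : IsOpen U) : IsOpen (q '' U) := by
  rw [isOpen_iff_mem_nhds]
  rintro _ ⟨z, hz, rfl⟩
  obtain ⟨e, he⟩ := hq z hz
  rw [← he.map_nhds_eq_of_equiv]
  exact Filter.image_mem_map (hU.mem_nhds hz)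

lemma exists_open_injOn_of_strict {q : ℂ → ℂ} {z : ℂ} {e : ℂ ≃L[ℝ] ℂ}
    (he : HasStrictFDerivAt q (e : ℂ →L[ℝ] ℂ) z) :
    ∃ V, IsOpen V ∧ z ∈ V ∧ Set.InjOn q V := by
  refine ⟨(he.toOpenPartialHomeomorph q).source, (he.toOpenPartialHomeomorph q).open_source,
    he.mem_toOpenPartialHomeomorph_source, ?_⟩
  have := (he.toOpenPartialHomeomorph q).injOn
  rwa [he.toOpenPartialHomeomorph_coe] at this

/-- interior-max contradiction -/
lemma maxcase {ρ : ℝ → ℝ} {x₁ x₂ c : ℝ} (hx : x₁ < x₂)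
    (hc : ContinuousOn ρ (Icc x₁ x₂)) (hcm : c ∈ Icc x₁ x₂)
    (hmax : ∀ x ∈ Icc x₁ x₂, ρ x ≤ ρ c) (h₁ : ρ x₁ < ρ c) (h₂ : ρ x₂ < ρ c)
    (hloc : ∀ c ∈ Icc x₁ x₂, ∃ ε > 0, Set.InjOn ρ (Icc x₁ x₂ ∩ Ioo (c - ε) (c + ε))) :
    False := by
  have hc1 : x₁ < c := lt_of_le_of_ne hcm.1 (fun hEq => absurd (hEq ▸ rfl : ρ x₁ = ρ c) (ne_of_lt h₁))
  have hc2 : c < x₂ := lt_of_le_of_ne hcm.2 (fun hEq => absurd (hEq ▸ rfl : ρ c = ρ x₂) (ne_of_gt h₂))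
  obtain ⟨ε, hε, hinj⟩ := hloc c hcm
  set δ : ℝ := min (min (ε / 2) (c - x₁)) (x₂ - c) with hδdef
  have hδ : 0 < δ := lt_min (lt_min (by linarith) (by linarith)) (by linarith)
  have hδε : δ < ε := lt_of_le_of_lt ((min_le_left _ _).trans (min_le_left _ _)) (by linarith)
  have hδ1 : x₁ ≤ c - δ := by
    have : δ ≤ c - x₁ := (min_le_left _ _).trans (min_le_right _ _)
    linarith
  have hδ2 : c + δ ≤ x₂ := by
    have : δ ≤ x₂ - c := min_le_right _ _
    linarith
  have hmem : ∀ x, c - δ ≤ x → x ≤ c + δ → x ∈ Icc x₁ x₂ ∩ Ioo (c - ε) (c + ε) := by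
    intro x hx1 hx2
    exact ⟨⟨by linarith, by linarith⟩, ⟨by linarith, by linarith⟩⟩
  have hcw : c ∈ Icc x₁ x₂ ∩ Ioo (c - ε) (c + ε) := hmem c (by linarith) (by linarith)
  have hmw : c - δ ∈ Icc x₁ x₂ ∩ Ioo (c - ε) (c + ε) := hmem _ le_rfl (by linarith)
  have hpw : c + δ ∈ Icc x₁ x₂ ∩ Ioo (c - ε) (c + ε) := hmem _ (by linarith) le_rfl
  have hu : ρ (c - δ) < ρ c := by
    rcases lt_or_eq_of_le (hmax _ hmw.1) with hlt | hEq
    · exact hlt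
    · exact absurd (hinj hmw hcw hEq) (by intro hh; linarith)
  have hv : ρ (c + δ) < ρ c := by
    rcases lt_or_eq_of_le (hmax _ hpw.1) with hlt | hEq
    · exact hlt
    · exact absurd (hinj hpw hcw hEq) (by intro hh; linarith)
  set m : ℝ := max (ρ (c - δ)) (ρ (c + δ)) with hm
  have hmlt : m < ρ c := max_lt hu hv
  have hp : ∃ p ∈ Icc (c - δ) c, ρ p = m := by
    have hsub : Icc (c - δ) c ⊆ Icc x₁ x₂ := Icc_subset_Icc hδ1 (by linarith)
    have := intermediate_value_Icc (by linarith : c - δ ≤ c) (hc.mono hsub)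
    exact this ⟨le_max_left _ _, le_of_lt hmlt⟩
  have hq : ∃ p ∈ Icc c (c + δ), ρ p = m := by
    have hsub : Icc c (c + δ) ⊆ Icc x₁ x₂ := Icc_subset_Icc (by linarith) hδ2
    have := intermediate_value_Icc' (by linarith : c ≤ c + δ) (hc.mono hsub)
    exact this ⟨le_max_right _ _, le_of_lt hmlt⟩
  obtain ⟨p, hpI, hpv⟩ := hp
  obtain ⟨q, hqI, hqv⟩ := hq
  have hpflt : p < c := lt_of_le_of_ne hpI.2 (fun hh => by rw [hh] at hpv; linarith)
  have hqfgt : c < q := lt_of_le_of_ne hqI.1 (fun hh => by rw [← hh] at hqv; linarith)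
  have : p = q := hinj (hmem p hpI.1 (by linarith)) (hmem q (by linarith) hqI.2) (by rw [hpv, hqv])
  linarith

lemma real1d {ρ : ℝ → ℝ} {x₁ x₂ : ℝ} (hx : x₁ < x₂)
    (hc : ContinuousOn ρ (Icc x₁ x₂)) (heq : ρ x₁ = ρ x₂)
    (hloc : ∀ c ∈ Icc x₁ x₂, ∃ ε > 0, Set.InjOn ρ (Icc x₁ x₂ ∩ Ioo (c - ε) (c + ε))) :
    False := by
  have hcompact : IsCompact (Icc x₁ x₂) := isCompact_Icc
  have hne : (Icc x₁ x₂).Nonempty := nonempty_Icc.2 (le_of_lt hx)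
  obtain ⟨cM, hcM, hM'⟩ := hcompact.exists_isMaxOn hne hc
  obtain ⟨cm, hcm, hmn'⟩ := hcompact.exists_isMinOn hne hc
  have hM : ∀ x ∈ Icc x₁ x₂, ρ x ≤ ρ cM := isMaxOn_iff.mp hM'
  have hmn : ∀ x ∈ Icc x₁ x₂, ρ cm ≤ ρ x := isMinOn_iff.mp hmn'
  have hx₁ : x₁ ∈ Icc x₁ x₂ := ⟨le_rfl, le_of_lt hx⟩
  have hx₂ : x₂ ∈ Icc x₁ x₂ := ⟨le_of_lt hx, le_rfl⟩
  rcases lt_or_eq_of_le (hM x₁ hx₁) with hlt | hEqM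
  · exact maxcase hx hc hcM (fun x hx' => hM x hx') hlt (heq ▸ hlt) hloc
  · rcases lt_or_eq_of_le (hmn x₁ hx₁) with hlt | hEqm
    · refine maxcase (ρ := fun x => -ρ x) hx hc.neg hcm
        (fun x hx' => neg_le_neg (hmn x hx')) (by simpa using hlt) (by show -ρ x₂ < -ρ cm; rw [← heq]; simpa using hlt) ?_
      intro c hcI
      obtain ⟨ε, hε, hinj⟩ := hloc c hcI
      exact ⟨ε, hε, fun a ha b hb hab => hinj ha hb (by simpa using hab)⟩
    · -- ρ is constant on Icc x₁ x₂
      have hconst : ∀ x ∈ Icc x₁ x₂, ρ x = ρ x₁ := by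
        intro x hx'
        exact le_antisymm (hEqM ▸ hM x hx') (hEqm ▸ hmn x hx')
      obtain ⟨ε, hε, hinj⟩ := hloc x₁ hx₁
      set t : ℝ := min x₂ (x₁ + ε / 2) with ht
      have htI : t ∈ Icc x₁ x₂ := ⟨le_min (le_of_lt hx) (by linarith), min_le_left _ _⟩
      have htgt : x₁ < t := lt_min hx (by linarith)
      have h1w : x₁ ∈ Icc x₁ x₂ ∩ Ioo (x₁ - ε) (x₁ + ε) := ⟨hx₁, by constructor <;> linarith⟩
      have htw : t ∈ Icc x₁ x₂ ∩ Ioo (x₁ - ε) (x₁ + ε) := by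
        refine ⟨htI, ⟨by linarith, ?_⟩⟩
        have : t ≤ x₁ + ε / 2 := min_le_right _ _
        linarith
      have := hinj htw h1w (by rw [hconst t htI])
      linarith

lemma im_of_mem_segment {p q t : ℂ} (hpq : p.im = q.im) (ht : t ∈ segment ℝ p q) :
    t.im = p.im := by
  obtain ⟨α, β, hα, hβ, hαβ, rfl⟩ := ht
  simp only [Complex.add_im, Complex.smul_im, smul_eq_mul]
  rw [← hpq]
  linear_combination p.im * hαβ

lemma re_mem_uIcc_of_mem_segment {p q t : ℂ} (ht : t ∈ segment ℝ p q) :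
    t.re ∈ uIcc p.re q.re := by
  obtain ⟨α, β, hα, hβ, hαβ, rfl⟩ := ht
  rw [← segment_eq_uIcc]
  exact ⟨α, β, hα, hβ, hαβ, by simp [Complex.add_re, Complex.smul_re]⟩

lemma mem_segment_horiz {x₁ x₂ x a : ℝ} (h1 : x₁ ≤ x) (h2 : x ≤ x₂) :
    (⟨x, a⟩ : ℂ) ∈ segment ℝ (⟨x₁, a⟩ : ℂ) (⟨x₂, a⟩ : ℂ) := by
  rcases eq_or_lt_of_le (h1.trans h2) with hEq | hlt
  · have hx1 : x = x₁ := le_antisymm (hEq ▸ h2) h1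
    rw [hx1, hEq]
    exact left_mem_segment _ _ _
  · have hne : x₂ - x₁ ≠ 0 := by linarith
    refine ⟨(x₂ - x) / (x₂ - x₁), (x - x₁) / (x₂ - x₁),
      div_nonneg (by linarith) (by linarith), div_nonneg (by linarith) (by linarith), ?_, ?_⟩
    · field_simp; ring
    · apply Complex.ext
      · simp only [Complex.add_re, Complex.smul_re]
        rw [smul_eq_mul, smul_eq_mul, div_mul_eq_mul_div, div_mul_eq_mul_div, ← add_div, div_eq_iff hne]; ring
      · simp only [Complex.add_im, Complex.smul_im]
        rw [smul_eq_mul, smul_eq_mul, div_mul_eq_mul_div, div_mul_eq_mul_div, ← add_div, div_eq_iff hne]; ring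

lemma slice_mem_of_preconnected {T : Set ℂ} (hconn : IsPreconnected T) {a : ℝ}
    (hT : ∀ z ∈ T, z.im = a) {p q : ℂ} (hp : p ∈ T) (hq : q ∈ T) {t : ℂ}
    (him : t.im = a) (hre : t.re ∈ uIcc p.re q.re) : t ∈ T := by
  have hpre : IsPreconnected ((fun z => z.re) '' T) :=
    hconn.image _ Complex.continuous_re.continuousOn
  have hord := hpre.ordConnected
  have hmem : t.re ∈ (fun z => z.re) '' T :=
    hord.uIcc_subset ⟨p, hp, rfl⟩ ⟨q, hq, rfl⟩ hre
  obtain ⟨s, hsT, hsre⟩ := hmem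
  have : s = t := Complex.ext hsre (by rw [hT s hsT, him])
  rwa [← this]

lemma segment_subset_of_preconnected {S : Set ℂ} {a : ℝ} (hS : ∀ z ∈ S, z.im = a)
    (hconn : IsPreconnected S) {p q : ℂ} (hp : p ∈ S) (hq : q ∈ S) :
    segment ℝ p q ⊆ S := by
  intro t ht
  have him : t.im = a := by
    have := im_of_mem_segment (by rw [hS p hp, hS q hq]) ht
    rw [this, hS p hp]
  exact slice_mem_of_preconnected hconn hS hp hq him (re_mem_uIcc_of_mem_segment ht)

lemma oneD {φ : ℂ → ℂ} {Ω : Set ℂ} (hφc : ContinuousOn φ Ω)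
    (hIm : ∀ w ∈ Ω, (φ w).im = w.im)
    (hloc : ∀ w ∈ Ω, ∃ V, IsOpen V ∧ w ∈ V ∧ Set.InjOn φ V)
    {a x₁ x₂ : ℝ} (hx : x₁ < x₂)
    (hsub : ∀ x ∈ Icc x₁ x₂, (⟨x, a⟩ : ℂ) ∈ Ω)
    (heq : φ ⟨x₁, a⟩ = φ ⟨x₂, a⟩) : False := by
  set ρ : ℝ → ℝ := fun x => (φ ⟨x, a⟩).re with hρ
  have hmk : Continuous fun x : ℝ => (⟨x, a⟩ : ℂ) := by
    have hfe : (fun x : ℝ => (⟨x, a⟩ : ℂ)) = fun x : ℝ => (x : ℂ) + a * Complex.I := by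
      funext x; apply Complex.ext <;> simp
    rw [hfe]; exact Complex.continuous_ofReal.add continuous_const
  have hρc : ContinuousOn ρ (Icc x₁ x₂) := by
    apply Complex.continuous_re.comp_continuousOn
    exact hφc.comp hmk.continuousOn (fun x hx' => hsub x hx')
  have hdet : ∀ x ∈ Icc x₁ x₂, φ ⟨x, a⟩ = ⟨ρ x, a⟩ := by
    intro x hx'
    apply Complex.ext
    · rfl
    · simpa using hIm _ (hsub x hx')
  have hρeq : ρ x₁ = ρ x₂ := by simp only [hρ, heq]
  refine real1d hx hρc hρeq ?_
  intro c hcI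
  obtain ⟨V, hVo, hVm, hVinj⟩ := hloc _ (hsub c hcI)
  obtain ⟨ε, hε, hball⟩ := Metric.isOpen_iff.mp hVo _ hVm
  refine ⟨ε, hε, ?_⟩
  intro x hxw y hyw hxy
  have hdist : ∀ u : ℝ, u ∈ Ioo (c - ε) (c + ε) → (⟨u, a⟩ : ℂ) ∈ V := by
    intro u hu
    apply hball
    rw [mem_ball, Complex.dist_of_im_eq (show (⟨u, a⟩ : ℂ).im = (⟨c, a⟩ : ℂ).im from rfl)]
    rw [Real.dist_eq]
    rcases hu with ⟨hu1, hu2⟩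
    rw [abs_lt]
    constructor <;> [linarith; linarith]
  have hxy' : φ (⟨x, a⟩ : ℂ) = φ (⟨y, a⟩ : ℂ) := by
    rw [hdet x hxw.1, hdet y hyw.1, hxy]
  have := hVinj (hdist x hxw.2) (hdist y hyw.2) hxy'
  exact congrArg Complex.re this

end ShearHelpers

theorem shear_generalization_forward
    (h g : ℂ → ℂ)
    (hh : DifferentiableOn ℂ h (ball (0 : ℂ) 1))
    (hg : DifferentiableOn ℂ g (ball (0 : ℂ) 1))
    (f : ℂ → ℂ) (hf : ∀ z, f z = h z + (starRingEnd ℂ) (g z))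
    (hJ : ∀ z ∈ ball (0 : ℂ) 1, ‖deriv g z‖ < ‖deriv h z‖)
    (hLy : Ly ((fun z => h z - g z) '' ball (0 : ℂ) 1) = Ly (f '' ball (0 : ℂ) 1))
    (hinj : Set.InjOn f (ball (0 : ℂ) 1))
    (hdec : ∃ D₁ D₂ : Set ℂ, IsOpen D₁ ∧ IsConnected D₁ ∧ CvxRe D₁ ∧
      IsOpen D₂ ∧ IsConnected D₂ ∧ CvxRe D₂ ∧ (D₁ ∩ D₂).Nonempty ∧
      f '' ball (0 : ℂ) 1 = D₁ ∪ D₂) :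
    Set.InjOn (fun z => h z - g z) (ball (0 : ℂ) 1) ∧
    ∃ Ω₁ Ω₂ : Set ℂ, IsOpen Ω₁ ∧ IsConnected Ω₁ ∧ CvxRe Ω₁ ∧
      IsOpen Ω₂ ∧ IsConnected Ω₂ ∧ CvxRe Ω₂ ∧ (Ω₁ ∩ Ω₂).Nonempty ∧
      (fun z => h z - g z) '' ball (0 : ℂ) 1 = Ω₁ ∪ Ω₂ := by
  obtain ⟨D₁, D₂, hD₁o, hD₁c, hD₁v, hD₂o, hD₂c, hD₂v, hD₁₂, hDu⟩ := hdec
  set B : Set ℂ := ball (0:ℂ) 1 with hBdef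
  set F : ℂ → ℂ := fun z => h z - g z with hFdef
  have hBo : IsOpen B := isOpen_ball
  have hfeq : f = fun z => h z + (starRingEnd ℂ) (g z) := funext hf
  -- strict derivatives of f
  have hsf : ∀ z ∈ B, ∃ e : ℂ ≃L[ℝ] ℂ, HasStrictFDerivAt f (e : ℂ →L[ℝ] ℂ) z := by
    intro z hz
    rw [hfeq]
    exact ⟨_, shear_hasStrictFDerivAt hBo hh hg hz (hJ z hz)⟩
  -- strict derivatives of F
  have hhg : DifferentiableOn ℂ F B := hh.sub hg
  have hJF : ∀ z ∈ B, ‖deriv (fun _ : ℂ => (0:ℂ)) z‖ < ‖deriv F z‖ := by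
    intro z hz
    have hdF : deriv F z = deriv h z - deriv g z := by
      rw [hFdef]
      exact deriv_sub (hh.differentiableAt (hBo.mem_nhds hz)) (hg.differentiableAt (hBo.mem_nhds hz))
    have hnorm : ‖deriv h z‖ - ‖deriv g z‖
        ≤ ‖deriv h z - deriv g z‖ := by
      have := norm_sub_norm_le (deriv h z) (deriv g z)
      simpa using this
    have h1 : ‖deriv g z‖ < ‖deriv h z‖ := hJ z hz
    rw [hdF]
    simp only [deriv_const', map_zero, norm_zero]
    linarith
  have hsF : ∀ z ∈ B, ∃ e : ℂ ≃L[ℝ] ℂ, HasStrictFDerivAt F (e : ℂ →L[ℝ] ℂ) z := by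
    intro z hz
    have H := shear_hasStrictFDerivAt (h := F) (g := fun _ : ℂ => (0:ℂ)) hBo hhg
      (differentiableOn_const 0) hz (hJF z hz)
    have hFfun : (fun w => F w + (starRingEnd ℂ) ((fun _ : ℂ => (0:ℂ)) w)) = F := by
      funext w; simp
    rw [hFfun] at H
    exact ⟨_, H⟩
  -- continuity
  have hfc : ContinuousOn f B := by
    rw [hfeq]
    exact (hh.continuousOn).add (Complex.continuous_conj.comp_continuousOn hg.continuousOn)
  have hFc : ContinuousOn F B := (hh.sub hg).continuousOn
  have hImF : ∀ z, (F z).im = (f z).im := by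
    intro z
    rw [hf z, hFdef]
    simp [Complex.sub_im, Complex.add_im, Complex.conj_im]
    ring
  set Ω : Set ℂ := f '' B with hΩdef
  set ψ : ℂ → ℂ := Function.invFunOn f B with hψdef
  have hψ : ∀ w ∈ Ω, ψ w ∈ B ∧ f (ψ w) = w := by
    intro w hw
    obtain ⟨z, hz, rfl⟩ := hw
    exact ⟨Function.invFunOn_mem ⟨z, hz, rfl⟩, Function.invFunOn_eq ⟨z, hz, rfl⟩⟩
  have hψf : ∀ z ∈ B, ψ (f z) = z := fun z hz => hinj.leftInvOn_invFunOn hz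
  set φ : ℂ → ℂ := fun w => F (ψ w) with hφdef
  have hφf : ∀ z ∈ B, φ (f z) = F z := by
    intro z hz
    rw [hφdef]
    simp only []
    rw [hψf z hz]
  have hImφ : ∀ w ∈ Ω, (φ w).im = w.im := by
    intro w hw
    rw [hφdef]
    simp only []
    rw [hImF (ψ w), (hψ w hw).2]
  have hφΩ : φ '' Ω = F '' B := by
    apply Subset.antisymm
    · rintro _ ⟨w, hw, rfl⟩
      exact ⟨ψ w, (hψ w hw).1, rfl⟩
    · rintro _ ⟨z, hz, rfl⟩
      exact ⟨f z, ⟨z, hz, rfl⟩, hφf z hz⟩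
  have hopenf : ∀ U, IsOpen U → U ⊆ B → IsOpen (f '' U) := fun U hU hUB =>
    isOpen_image_of_strict (fun z hz => hsf z (hUB hz)) hU
  have hψc : ContinuousOn ψ Ω := by
    rw [_root_.continuousOn_iff]
    intro w hw V hV hψV
    refine ⟨f '' (V ∩ B), hopenf _ (hV.inter hBo) inter_subset_right, ?_, ?_⟩
    · exact ⟨ψ w, ⟨hψV, (hψ w hw).1⟩, (hψ w hw).2⟩
    · rintro _ ⟨⟨z, ⟨hzV, hzB⟩, rfl⟩, -⟩
      rw [mem_preimage, hψf z hzB]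
      exact hzV
  have hφc : ContinuousOn φ Ω := hFc.comp hψc (fun w hw => (hψ w hw).1)
  have hφloc : ∀ w ∈ Ω, ∃ V, IsOpen V ∧ w ∈ V ∧ Set.InjOn φ V := by
    intro w hw
    obtain ⟨z, hz, rfl⟩ := hw
    obtain ⟨e, he⟩ := hsF z hz
    obtain ⟨N, hNo, hzN, hNinj⟩ := exists_open_injOn_of_strict he
    refine ⟨f '' (N ∩ B), hopenf _ (hNo.inter hBo) inter_subset_right, ⟨z, ⟨hzN, hz⟩, rfl⟩, ?_⟩
    rintro _ ⟨z₁, hz₁, rfl⟩ _ ⟨z₂, hz₂, rfl⟩ hEq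
    rw [hφf z₁ hz₁.2, hφf z₂ hz₂.2] at hEq
    rw [hNinj hz₁.1 hz₂.1 hEq]
  have hD₁Ω : D₁ ⊆ Ω := by rw [hDu]; exact subset_union_left
  have hD₂Ω : D₂ ⊆ Ω := by rw [hDu]; exact subset_union_right
  -- key injectivity on slices
  have key : ∀ w₁ ∈ Ω, ∀ w₂ ∈ Ω, w₁.im = w₂.im → φ w₁ = φ w₂ → w₁ = w₂ := by
    intro w₁ hw₁ w₂ hw₂ him hpeq
    by_contra hne
    have hre : w₁.re ≠ w₂.re := fun hEq => hne (Complex.ext hEq him)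
    by_cases hseg : segment ℝ w₁ w₂ ⊆ Ω
    · have main : ∀ u v : ℂ, u.im = v.im → u.re < v.re → segment ℝ u v ⊆ Ω →
          φ u = φ v → False := by
        intro u v huv hlt hsub hfeq'
        have hu' : (⟨u.re, u.im⟩ : ℂ) = u := Complex.eta u
        have hv' : (⟨v.re, u.im⟩ : ℂ) = v := by
          rw [huv]
        have hsub' : ∀ x ∈ Icc u.re v.re, (⟨x, u.im⟩ : ℂ) ∈ Ω := by
          intro x hx'
          apply hsub
          have := mem_segment_horiz (a := u.im) hx'.1 hx'.2
          rwa [hu', hv'] at this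
        refine oneD hφc hImφ hφloc hlt hsub' ?_
        rw [hu', hv']
        exact hfeq'
      rcases lt_or_gt_of_ne hre with hlt | hgt
      · exact main w₁ w₂ him hlt hseg hpeq
      · exact main w₂ w₁ him.symm hgt (by rwa [segment_symm]) hpeq.symm
    · obtain ⟨t, htseg, htΩ⟩ := not_subset.mp hseg
      have hta : t.im = w₁.im := im_of_mem_segment him htseg
      have htre : t.re ∈ uIcc w₁.re w₂.re := re_mem_uIcc_of_mem_segment htseg
      have hnot : w₁.im ∉ Ly Ω := by
        intro hmem
        have hconn : IsConnected (Ω ∩ {z : ℂ | z.im = w₁.im}) := hmem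
        have ht' : t ∈ Ω ∩ {z : ℂ | z.im = w₁.im} :=
          slice_mem_of_preconnected hconn.2 (fun z hz => hz.2)
            ⟨hw₁, rfl⟩ ⟨hw₂, him.symm⟩ hta htre
        exact htΩ ht'.1
      have hcont : ∀ E₁ E₂ : Set ℂ, CvxRe E₁ → CvxRe E₂ → E₁ ∪ E₂ = D₁ ∪ D₂ →
          w₁ ∈ E₁ → w₂ ∈ E₂ → False := by
        intro E₁ E₂ hv₁ hv₂ hEu hw₁E hw₂E
        have hE₁Ω : E₁ ⊆ Ω := by
          rw [hDu, ← hEu]; exact subset_union_left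
        have hE₂Ω : E₂ ⊆ Ω := by
          rw [hDu, ← hEu]; exact subset_union_right
        have hnotF : w₁.im ∉ Ly (F '' B) := by rw [hLy]; exact hnot
        apply hnotF
        have hslice : (F '' B) ∩ {z : ℂ | z.im = w₁.im}
            = φ '' (Ω ∩ {z : ℂ | z.im = w₁.im}) := by
          apply Subset.antisymm
          · rintro _ ⟨⟨z, hz, rfl⟩, hu⟩
            refine ⟨f z, ⟨⟨z, hz, rfl⟩, ?_⟩, hφf z hz⟩
            rw [mem_setOf_eq, ← hImF z]
            exact hu
          · rintro _ ⟨w, ⟨hwΩ, hwa⟩, rfl⟩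
            refine ⟨⟨ψ w, (hψ w hwΩ).1, rfl⟩, ?_⟩
            rw [mem_setOf_eq, hImφ w hwΩ]
            exact hwa
        have hzdecomp : Ω ∩ {z : ℂ | z.im = w₁.im}
            = (E₁ ∩ {z : ℂ | z.im = w₁.im}) ∪ (E₂ ∩ {z : ℂ | z.im = w₁.im}) := by
          rw [hDu, ← hEu, union_inter_distrib_right]
        have hcv : ∀ E : Set ℂ, CvxRe E → Convex ℝ (E ∩ {z : ℂ | z.im = w₁.im}) := by
          intro E hv
          rw [convex_iff_segment_subset]
          rintro p ⟨hpE, hpa⟩ q ⟨hqE, hqa⟩ t' ht'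
          have hpq : p.im = q.im := by rw [mem_setOf_eq] at hpa hqa; rw [hpa, hqa]
          refine ⟨hv p hpE q hqE hpq ht', ?_⟩
          rw [mem_setOf_eq, im_of_mem_segment hpq ht']
          exact hpa
        have himg : ∀ E : Set ℂ, E ⊆ Ω → CvxRe E →
            IsPreconnected (φ '' (E ∩ {z : ℂ | z.im = w₁.im})) := by
          intro E hEΩ hv
          exact ((hcv E hv).isPreconnected).image φ
            (hφc.mono (fun x hx => hEΩ hx.1))
        have hmem₁ : φ w₁ ∈ φ '' (E₁ ∩ {z : ℂ | z.im = w₁.im}) :=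
          ⟨w₁, ⟨hw₁E, rfl⟩, rfl⟩
        have hmem₂ : φ w₁ ∈ φ '' (E₂ ∩ {z : ℂ | z.im = w₁.im}) := by
          rw [hpeq]
          exact ⟨w₂, ⟨hw₂E, him.symm⟩, rfl⟩
        have hpre : IsPreconnected ((F '' B) ∩ {z : ℂ | z.im = w₁.im}) := by
          rw [hslice, hzdecomp, image_union]
          exact IsPreconnected.union (φ w₁) hmem₁ hmem₂
            (himg E₁ hE₁Ω hv₁) (himg E₂ hE₂Ω hv₂)
        have hne' : ((F '' B) ∩ {z : ℂ | z.im = w₁.im}).Nonempty := by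
          rw [hslice, hzdecomp, image_union]
          exact ⟨φ w₁, Or.inl hmem₁⟩
        exact ⟨hne', hpre⟩
      have hw₁' : w₁ ∈ D₁ ∪ D₂ := by rw [← hDu]; exact hw₁
      have hw₂' : w₂ ∈ D₁ ∪ D₂ := by rw [← hDu]; exact hw₂
      have hsame : ∀ E : Set ℂ, CvxRe E → E ⊆ Ω → w₁ ∈ E → w₂ ∈ E → False := by
        intro E hv hEΩ h1 h2
        exact htΩ (hEΩ (hv w₁ h1 w₂ h2 him htseg))
      rcases hw₁' with h1 | h1 <;> rcases hw₂' with h2 | h2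
      · exact hsame D₁ hD₁v hD₁Ω h1 h2
      · exact hcont D₁ D₂ hD₁v hD₂v rfl h1 h2
      · exact hcont D₂ D₁ hD₂v hD₁v (union_comm _ _) h1 h2
      · exact hsame D₂ hD₂v hD₂Ω h1 h2
  -- injectivity of F
  have hFinj : Set.InjOn F B := by
    intro z₁ hz₁ z₂ hz₂ hFeq'
    have h1 : f z₁ ∈ Ω := ⟨z₁, hz₁, rfl⟩
    have h2 : f z₂ ∈ Ω := ⟨z₂, hz₂, rfl⟩
    have him : (f z₁).im = (f z₂).im := by rw [← hImF z₁, ← hImF z₂, hFeq']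
    have hphi : φ (f z₁) = φ (f z₂) := by rw [hφf z₁ hz₁, hφf z₂ hz₂, hFeq']
    exact hinj hz₁ hz₂ (key _ h1 _ h2 him hphi)
  refine ⟨hFinj, φ '' D₁, φ '' D₂, ?_, ?_, ?_, ?_, ?_, ?_, ?_, ?_⟩
  · -- open 1
    have himg : φ '' D₁ = F '' (B ∩ f ⁻¹' D₁) := by
      apply Subset.antisymm
      · rintro _ ⟨w, hw, rfl⟩
        exact ⟨ψ w, ⟨(hψ w (hD₁Ω hw)).1, by rw [mem_preimage, (hψ w (hD₁Ω hw)).2]; exact hw⟩, rfl⟩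
      · rintro _ ⟨z, ⟨hzB, hzE⟩, rfl⟩
        exact ⟨f z, hzE, hφf z hzB⟩
    rw [himg]
    exact isOpen_image_of_strict (fun z hz => hsF z hz.1) (hfc.isOpen_inter_preimage hBo hD₁o)
  · exact hD₁c.image φ (hφc.mono hD₁Ω)
  · -- CvxRe 1
    rintro _ ⟨w, hw, rfl⟩ _ ⟨w', hw', rfl⟩ him'
    have hww' : w.im = w'.im := by
      rw [← hImφ w (hD₁Ω hw), ← hImφ w' (hD₁Ω hw')]
      exact him'
    have hsegE : segment ℝ w w' ⊆ D₁ := hD₁v w hw w' hw' hww'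
    have hpre : IsPreconnected (φ '' segment ℝ w w') :=
      ((convex_segment w w').isPreconnected).image φ (hφc.mono (hsegE.trans hD₁Ω))
    have hSim : ∀ u ∈ φ '' segment ℝ w w', u.im = (φ w).im := by
      rintro _ ⟨t, ht, rfl⟩
      rw [hImφ t (hD₁Ω (hsegE ht)), im_of_mem_segment hww' ht, ← hImφ w (hD₁Ω hw)]
    have := segment_subset_of_preconnected hSim hpre
      ⟨w, left_mem_segment _ _ _, rfl⟩ ⟨w', right_mem_segment _ _ _, rfl⟩
    exact this.trans (image_mono hsegE)
  · -- open 2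
    have himg : φ '' D₂ = F '' (B ∩ f ⁻¹' D₂) := by
      apply Subset.antisymm
      · rintro _ ⟨w, hw, rfl⟩
        exact ⟨ψ w, ⟨(hψ w (hD₂Ω hw)).1, by rw [mem_preimage, (hψ w (hD₂Ω hw)).2]; exact hw⟩, rfl⟩
      · rintro _ ⟨z, ⟨hzB, hzE⟩, rfl⟩
        exact ⟨f z, hzE, hφf z hzB⟩
    rw [himg]
    exact isOpen_image_of_strict (fun z hz => hsF z hz.1) (hfc.isOpen_inter_preimage hBo hD₂o)
  · exact hD₂c.image φ (hφc.mono hD₂Ω)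
  · -- CvxRe 2
    rintro _ ⟨w, hw, rfl⟩ _ ⟨w', hw', rfl⟩ him'
    have hww' : w.im = w'.im := by
      rw [← hImφ w (hD₂Ω hw), ← hImφ w' (hD₂Ω hw')]
      exact him'
    have hsegE : segment ℝ w w' ⊆ D₂ := hD₂v w hw w' hw' hww'
    have hpre : IsPreconnected (φ '' segment ℝ w w') :=
      ((convex_segment w w').isPreconnected).image φ (hφc.mono (hsegE.trans hD₂Ω))
    have hSim : ∀ u ∈ φ '' segment ℝ w w', u.im = (φ w).im := by
      rintro _ ⟨t, ht, rfl⟩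
      rw [hImφ t (hD₂Ω (hsegE ht)), im_of_mem_segment hww' ht, ← hImφ w (hD₂Ω hw)]
    have := segment_subset_of_preconnected hSim hpre
      ⟨w, left_mem_segment _ _ _, rfl⟩ ⟨w', right_mem_segment _ _ _, rfl⟩
    exact this.trans (image_mono hsegE)
  · -- nonempty intersection
    obtain ⟨u₀, hu₁, hu₂⟩ := hD₁₂
    exact ⟨φ u₀, ⟨u₀, hu₁, rfl⟩, ⟨u₀, hu₂, rfl⟩⟩
  · -- union
    rw [← image_union, ← hDu, hφΩ]
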